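/- Let D be a local (quasi-local) commutative integral domain. Then any two MNI ideals of D (ideals maximal among the nonzero non-invertible ideals) are equal; i.e., D has at most one MNI ideal. -/

import Mathlib

open scoped nonZeroDivisors

/-- An ideal of a domain is invertible if it is a unit as a fractional ideal. -/
def IsInvertibleIdeal (D : Type*) [CommRing D] [IsDomain D] (I : Ideal D) : Prop :=
  IsUnit (I : FractionalIdeal D⁰ (FractionRing D))

/-- An MNI ideal: maximal among the nonzero non-invertible ideals. -/
def IsMNI (D : Type*) [CommRing D] [IsDomain D] (P : Ideal D) : Prop :=
  P ≠ ⊥ ∧ ¬ IsInvertibleIdeal D P ∧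
    ∀ J : Ideal D, J ≠ ⊥ → ¬ IsInvertibleIdeal D J → P ≤ J → J = P

/-- A principal ideal generated by a nonzero element is invertible. -/
lemma isInvertible_span_singleton (D : Type*) [CommRing D] [IsDomain D] {a : D} (ha : a ≠ 0) :
    IsInvertibleIdeal D (Ideal.span {a}) := by
  have ha' : (algebraMap D (FractionRing D)) a ≠ 0 := by
    simpa using (map_ne_zero_iff _ (IsFractionRing.injective D (FractionRing D))).mpr ha
  rw [IsInvertibleIdeal, FractionalIdeal.coeIdeal_span_singleton]
  exact IsUnit.of_mul_eq_one (FractionalIdeal.spanSingleton _ ((algebraMap D (FractionRing D)) a)⁻¹)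
    (by rw [FractionalIdeal.spanSingleton_mul_spanSingleton, mul_inv_cancel₀ ha',
      FractionalIdeal.spanSingleton_one])

/-- If an MNI ideal is contained in a proper principal ideal `(a)`, then `aP = P`. -/
lemma mni_absorb (D : Type*) [CommRing D] [IsDomain D] {P : Ideal D} (hP : IsMNI D P)
    {a : D} (ha : a ≠ 0) (hle : P ≤ Ideal.span {a}) : Ideal.span {a} * P = P := by
  set J : Ideal D := P.colon (Ideal.span {a}) with hJ
  have hPJ : P ≤ J := fun p hp => Ideal.mem_colon_span_singleton.mpr (P.mul_mem_right a hp)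
  have hmul : Ideal.span {a} * J = P := by
    apply le_antisymm
    · rw [Ideal.span_singleton_mul_le_iff]
      intro x hx
      rw [hJ, Ideal.mem_colon_span_singleton] at hx
      rwa [mul_comm]
    · intro p hp
      obtain ⟨c, hc⟩ := Ideal.mem_span_singleton'.mp (hle hp)
      have hcJ : c ∈ J := Ideal.mem_colon_span_singleton.mpr (by rwa [hc])
      rw [← hc, mul_comm c a]
      exact Ideal.mul_mem_mul (Ideal.mem_span_singleton_self a) hcJ
  have heq : J = P := hP.2.2 J
    (fun h => hP.1 (le_bot_iff.mp (h ▸ hPJ)))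
    (fun hu => hP.2.1 (by
      rw [← hmul, IsInvertibleIdeal, FractionalIdeal.coeIdeal_mul]
      exact (isInvertible_span_singleton D ha).mul hu)) hPJ
  rw [← heq] at hmul ⊢
  exact hmul

theorem mni_unique_of_local (D : Type*) [CommRing D] [IsDomain D] [IsLocalRing D]
    (P Q : Ideal D) (hP : IsMNI D P) (hQ : IsMNI D Q) : P = Q := by
  by_cases hPQ : P ≤ Q
  · exact (hP.2.2 Q hQ.1 hQ.2.1 hPQ).symm
  by_cases hQP : Q ≤ P
  · exact hQ.2.2 P hP.1 hP.2.1 hQP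
  exfalso
  -- P and Q are proper since ⊤ is invertible
  have htop : IsInvertibleIdeal D (⊤ : Ideal D) := by
    rw [IsInvertibleIdeal, FractionalIdeal.coeIdeal_top]; exact isUnit_one
  have hPprop : P ≠ ⊤ := fun h => hP.2.1 (h ▸ htop)
  have hQprop : Q ≠ ⊤ := fun h => hQ.2.1 (h ▸ htop)
  set S := P ⊔ Q with hS
  have hSne : S ≠ ⊥ := fun h => hP.1 (le_bot_iff.mp (h ▸ (le_sup_left : P ≤ S)))
  have hSprop : S ≠ ⊤ := by
    intro h
    exact (IsLocalRing.maximalIdeal.isMaximal D).ne_top (top_le_iff.mp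
      (h ▸ sup_le (IsLocalRing.le_maximalIdeal hPprop) (IsLocalRing.le_maximalIdeal hQprop)))
  -- S must be invertible, else maximality of P forces S = P, contradicting Q ≰ P
  have hSinv : IsInvertibleIdeal D S := by
    by_contra hni
    exact hQP ((hP.2.2 S hSne hni le_sup_left) ▸ (le_sup_right : Q ≤ S))
  -- S is principal since D is local
  have hfin : {I : Ideal D | I.IsMaximal}.Finite := by
    have : {I : Ideal D | I.IsMaximal} ⊆ {IsLocalRing.maximalIdeal D} := fun I hI => by
      simpa using (IsLocalRing.eq_maximalIdeal hI)
    exact Set.Finite.subset (Set.finite_singleton _) this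
  obtain ⟨a, haS⟩ := Ideal.IsPrincipal.of_finite_maximals_of_isUnit hfin hSinv
  have ha : a ≠ 0 := by
    rintro rfl
    exact hSne (by rw [haS]; exact Ideal.span_singleton_eq_bot.mpr rfl)
  have haS' : S = Ideal.span {a} := haS
  -- aP = P and aQ = Q, hence aS = S = (a), so (a²) = (a), so a is a unit: contradiction
  have hPa : Ideal.span {a} * P = P := mni_absorb D hP ha (haS' ▸ (le_sup_left : P ≤ S))
  have hQa : Ideal.span {a} * Q = Q := mni_absorb D hQ ha (haS' ▸ (le_sup_right : Q ≤ S))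
  have hPa' : S * P = P := by rw [haS']; exact hPa
  have hQa' : S * Q = Q := by rw [haS']; exact hQa
  have hSS : S * S = S := by
    nth_rewrite 2 [hS]
    rw [Ideal.mul_sup, hPa', hQa', ← hS]
  have hmem : a ∈ Ideal.span ({a * a} : Set D) := by
    rw [← Ideal.span_singleton_mul_span_singleton, ← haS', hSS, haS']
    exact Ideal.mem_span_singleton_self a
  obtain ⟨c, hc⟩ := Ideal.mem_span_singleton'.mp hmem
  have hac : a * (c * a - 1) = 0 := by linear_combination hc
  have hca : c * a = 1 := by
    rcases mul_eq_zero.mp hac with h | h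
    · exact absurd h ha
    · rw [sub_eq_zero] at h; exact h
  exact hSprop (haS' ▸ Ideal.eq_top_of_isUnit_mem _ (Ideal.mem_span_singleton_self a)
    (IsUnit.of_mul_eq_one (a := a) c (by rw [mul_comm]; exact hca)))
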